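/- With G₁, G₂, G₃ the Whitehead link generators, H₁ = G₃⁻¹G₁⁻¹ equals [[-1-6i,-6-4i,2+4i],[-4+6i,1+8i,2-4i],[2+4i,4+2i,-1-2i]] and is parabolic, and H'₁ = G₃G₁⁻²G₃ equals [[5,2-6i,-4],[-8-4i,-7+8i,6+2i],[-8+8i,8+12i,5-8i]] and is parabolic. -/

import Mathlib

set_option maxHeartbeats 1000000

open Complex Matrix Polynomial

noncomputable section

def W₁ : Matrix (Fin 3) (Fin 3) ℂ :=
  !![1, 0, -Complex.I;
     -1 - Complex.I, 1, -1 + Complex.I;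
     -1 - Complex.I, 1 - Complex.I, Complex.I]

def W₃ : Matrix (Fin 3) (Fin 3) ℂ :=
  !![Complex.I, 1 + Complex.I, -Complex.I;
     1 - Complex.I, -1 - 2 * Complex.I, 2 * Complex.I;
     -1 - Complex.I, -3 + Complex.I, 3 + 2 * Complex.I]

/-- All eigenvalues of `M` have modulus one. -/
def UnitEigenvalues (M : Matrix (Fin 3) (Fin 3) ℂ) : Prop :=
  ∀ μ : ℂ, M.charpoly.IsRoot μ → ‖μ‖ = 1

/-- `M` is diagonalizable over `ℂ`. -/
def Diagonalizable (M : Matrix (Fin 3) (Fin 3) ℂ) : Prop :=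
  ∃ (P : Matrix (Fin 3) (Fin 3) ℂ) (d : Fin 3 → ℂ),
    IsUnit P.det ∧ M = P * Matrix.diagonal d * P⁻¹

/-- `M` is parabolic: all its eigenvalues have modulus one and it is not
diagonalizable. -/
def Parabolic (M : Matrix (Fin 3) (Fin 3) ℂ) : Prop :=
  UnitEigenvalues M ∧ ¬ Diagonalizable M

/-! ### Auxiliary lemmas -/

lemma aux_eval_charpoly (M : Matrix (Fin 3) (Fin 3) ℂ) (μ : ℂ) :
    (M.charpoly).eval μ = (μ • (1 : Matrix (Fin 3) (Fin 3) ℂ) - M).det := by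
  rw [Matrix.charpoly, ← Polynomial.coe_evalRingHom, RingHom.map_det]
  congr 1
  ext i j
  by_cases h : i = j
  · subst h
    simp [Matrix.charmatrix_apply_eq, Matrix.one_apply]
  · simp [Matrix.charmatrix_apply_ne _ _ _ h, Matrix.one_apply, h]

lemma aux_conj_mul (P : Matrix (Fin 3) (Fin 3) ℂ) (hP : P⁻¹ * P = 1)
    (X Y : Matrix (Fin 3) (Fin 3) ℂ) :
    (P * X * P⁻¹) * (P * Y * P⁻¹) = P * (X * Y) * P⁻¹ := by
  calc (P * X * P⁻¹) * (P * Y * P⁻¹)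
      = P * X * (P⁻¹ * P) * Y * P⁻¹ := by
        simp only [Matrix.mul_assoc]
    _ = P * (X * Y) * P⁻¹ := by
        rw [hP, Matrix.mul_one]; simp only [Matrix.mul_assoc]

lemma aux_conj_cancel (P Z : Matrix (Fin 3) (Fin 3) ℂ) (hP : P⁻¹ * P = 1)
    (h : P * Z * P⁻¹ = 0) : Z = 0 := by
  have key : P⁻¹ * (P * Z * P⁻¹) * P = Z := by
    simp only [← Matrix.mul_assoc]
    rw [hP, Matrix.one_mul, Matrix.mul_assoc, hP, Matrix.mul_one]
  rw [← key, h, Matrix.mul_zero, Matrix.zero_mul]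

/-- Generic non-diagonalizability criterion when `(M-1)(M+1)² = 0` but `M² ≠ 1`. -/
lemma aux_not_diag₁ (M : Matrix (Fin 3) (Fin 3) ℂ)
    (hq : (M - 1) * ((M + 1) * (M + 1)) = 0) (hM2 : M * M ≠ 1) :
    ¬ Diagonalizable M := by
  rintro ⟨P, d, hP, hMd⟩
  have hPi : P⁻¹ * P = 1 := Matrix.nonsing_inv_mul P hP
  have hPi' : P * P⁻¹ = 1 := Matrix.mul_nonsing_inv P hP
  set D : Matrix (Fin 3) (Fin 3) ℂ := Matrix.diagonal d with hD
  have hsub : M - 1 = P * (D - 1) * P⁻¹ := by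
    rw [hMd, Matrix.mul_sub, Matrix.sub_mul, Matrix.mul_one, hPi']
  have hadd : M + 1 = P * (D + 1) * P⁻¹ := by
    rw [hMd, Matrix.mul_add, Matrix.add_mul, Matrix.mul_one, hPi']
  have hq' : P * ((D - 1) * ((D + 1) * (D + 1))) * P⁻¹ = 0 := by
    rw [← aux_conj_mul P hPi, ← aux_conj_mul P hPi, ← hsub, ← hadd, hq]
  have hZ : (D - 1) * ((D + 1) * (D + 1)) = 0 := aux_conj_cancel P _ hPi hq'
  have e1 : D - 1 = Matrix.diagonal (fun i => d i - 1) := by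
    ext i j
    rcases eq_or_ne i j with rfl | hij
    · simp [hD, Matrix.diagonal_apply_eq, Matrix.one_apply]
    · simp [hD, Matrix.diagonal_apply_ne _ hij, Matrix.one_apply, hij]
  have e2 : D + 1 = Matrix.diagonal (fun i => d i + 1) := by
    ext i j
    rcases eq_or_ne i j with rfl | hij
    · simp [hD, Matrix.diagonal_apply_eq, Matrix.one_apply]
    · simp [hD, Matrix.diagonal_apply_ne _ hij, Matrix.one_apply, hij]
  have hdiag : Matrix.diagonal (fun i => (d i - 1) * ((d i + 1) * (d i + 1))) = 0 := by
    rw [← hZ, e1, e2, Matrix.diagonal_mul_diagonal, Matrix.diagonal_mul_diagonal]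
  have hd : ∀ i, d i * d i = 1 := by
    intro i
    have h0 : (d i - 1) * ((d i + 1) * (d i + 1)) = 0 := by
      have := congrFun (congrFun hdiag i) i
      simpa [Matrix.diagonal_apply_eq] using this
    rcases mul_eq_zero.mp h0 with h | h
    · rw [sub_eq_zero] at h; rw [h]; ring
    · rcases mul_eq_zero.mp h with h' | h' <;>
        · have : d i = -1 := by linear_combination h'
          rw [this]; ring
  have hDD : D * D = 1 := by
    rw [hD, Matrix.diagonal_mul_diagonal]
    have : (fun i => d i * d i) = fun _ => (1 : ℂ) := funext fun i => hd i
    rw [this, Matrix.diagonal_one]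
  apply hM2
  rw [hMd, aux_conj_mul P hPi, hDD, Matrix.mul_one, hPi']

/-- Generic non-diagonalizability criterion when `(M-1)³ = 0` but `M ≠ 1`. -/
lemma aux_not_diag₂ (M : Matrix (Fin 3) (Fin 3) ℂ)
    (hq : (M - 1) * ((M - 1) * (M - 1)) = 0) (hM1 : M ≠ 1) :
    ¬ Diagonalizable M := by
  rintro ⟨P, d, hP, hMd⟩
  have hPi : P⁻¹ * P = 1 := Matrix.nonsing_inv_mul P hP
  have hPi' : P * P⁻¹ = 1 := Matrix.mul_nonsing_inv P hP
  set D : Matrix (Fin 3) (Fin 3) ℂ := Matrix.diagonal d with hD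
  have hsub : M - 1 = P * (D - 1) * P⁻¹ := by
    rw [hMd, Matrix.mul_sub, Matrix.sub_mul, Matrix.mul_one, hPi']
  have hq' : P * ((D - 1) * ((D - 1) * (D - 1))) * P⁻¹ = 0 := by
    rw [← aux_conj_mul P hPi, ← aux_conj_mul P hPi, ← hsub, hq]
  have hZ : (D - 1) * ((D - 1) * (D - 1)) = 0 := aux_conj_cancel P _ hPi hq'
  have e1 : D - 1 = Matrix.diagonal (fun i => d i - 1) := by
    ext i j
    rcases eq_or_ne i j with rfl | hij
    · simp [hD, Matrix.diagonal_apply_eq, Matrix.one_apply]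
    · simp [hD, Matrix.diagonal_apply_ne _ hij, Matrix.one_apply, hij]
  have hdiag : Matrix.diagonal (fun i => (d i - 1) * ((d i - 1) * (d i - 1))) = 0 := by
    rw [← hZ, e1, Matrix.diagonal_mul_diagonal, Matrix.diagonal_mul_diagonal]
  have hd : ∀ i, d i = 1 := by
    intro i
    have h0 : (d i - 1) * ((d i - 1) * (d i - 1)) = 0 := by
      have := congrFun (congrFun hdiag i) i
      simpa [Matrix.diagonal_apply_eq] using this
    have h1 : d i - 1 = 0 := by
      rcases mul_eq_zero.mp h0 with h | h
      · exact h
      · rcases mul_eq_zero.mp h with h' | h' <;> exact h'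
    linear_combination h1
  have hD1 : D = 1 := by
    rw [hD]
    have : d = fun _ => (1 : ℂ) := funext hd
    rw [this, Matrix.diagonal_one]
  apply hM1
  rw [hMd, hD1, Matrix.mul_one, hPi']

lemma aux_W1_inv : W₁⁻¹ = !![-Complex.I, -1 - Complex.I, Complex.I;
    1 + Complex.I, 1, 0;
    -1 + Complex.I, -1 + Complex.I, 1] := by
  apply Matrix.inv_eq_right_inv
  rw [W₁, Matrix.mul_fin_three, Matrix.one_fin_three]
  ext i j
  fin_cases i <;> fin_cases j <;>
    simp [Matrix.vecHead, Matrix.vecTail, Complex.ext_iff] <;> norm_num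

lemma aux_W3_inv : W₃⁻¹ = !![3 - 2 * Complex.I, -2 * Complex.I, Complex.I;
    -3 - Complex.I, -1 + 2 * Complex.I, 1 - Complex.I;
    -1 + Complex.I, 1 + Complex.I, -Complex.I] := by
  apply Matrix.inv_eq_right_inv
  rw [W₃, Matrix.mul_fin_three, Matrix.one_fin_three]
  ext i j
  fin_cases i <;> fin_cases j <;>
    simp [Matrix.vecHead, Matrix.vecTail, Complex.ext_iff] <;> norm_num

lemma aux_H1_eq : W₃⁻¹ * W₁⁻¹ =
    !![-1 - 6 * Complex.I, -6 - 4 * Complex.I, 2 + 4 * Complex.I;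
       -4 + 6 * Complex.I, 1 + 8 * Complex.I, 2 - 4 * Complex.I;
       2 + 4 * Complex.I, 4 + 2 * Complex.I, -1 - 2 * Complex.I] := by
  rw [aux_W1_inv, aux_W3_inv, Matrix.mul_fin_three]
  ext i j
  fin_cases i <;> fin_cases j <;>
    simp [Matrix.vecHead, Matrix.vecTail, Complex.ext_iff] <;> norm_num

lemma aux_H2_eq : W₃ * (W₁⁻¹) ^ 2 * W₃ =
    !![5, 2 - 6 * Complex.I, -4;
       -8 - 4 * Complex.I, -7 + 8 * Complex.I, 6 + 2 * Complex.I;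
       -8 + 8 * Complex.I, 8 + 12 * Complex.I, 5 - 8 * Complex.I] := by
  have hsq : (W₁⁻¹) ^ 2 = !![-2 - 3 * Complex.I, -3 - Complex.I, 1 + Complex.I;
      2, 1 - 2 * Complex.I, -1 + Complex.I;
      -2 + 2 * Complex.I, 2 * Complex.I, -Complex.I] := by
    rw [sq, aux_W1_inv, Matrix.mul_fin_three]
    ext i j
    fin_cases i <;> fin_cases j <;>
      simp [Matrix.vecHead, Matrix.vecTail, Complex.ext_iff] <;> norm_num
  have h2 : W₃ * (W₁⁻¹) ^ 2 = !![7 + 2 * Complex.I, 6 - 4 * Complex.I, -4 + Complex.I;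
      -11 - 9 * Complex.I, -13 + 2 * Complex.I, 7 + Complex.I;
      -17 + 9 * Complex.I, -3 + 17 * Complex.I, 4 - 9 * Complex.I] := by
    rw [hsq, W₃, Matrix.mul_fin_three]
    ext i j
    fin_cases i <;> fin_cases j <;>
      simp [Matrix.vecHead, Matrix.vecTail, Complex.ext_iff] <;> norm_num
  rw [h2, W₃, Matrix.mul_fin_three]
  ext i j
  fin_cases i <;> fin_cases j <;>
    simp [Matrix.vecHead, Matrix.vecTail, Complex.ext_iff] <;> norm_num

lemma aux_unit₁ : UnitEigenvalues
    !![-1 - 6 * Complex.I, -6 - 4 * Complex.I, 2 + 4 * Complex.I;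
       -4 + 6 * Complex.I, 1 + 8 * Complex.I, 2 - 4 * Complex.I;
       2 + 4 * Complex.I, 4 + 2 * Complex.I, -1 - 2 * Complex.I] := by
  intro μ h
  rw [Polynomial.IsRoot, aux_eval_charpoly] at h
  have hm : μ • (1 : Matrix (Fin 3) (Fin 3) ℂ) -
      !![-1 - 6 * Complex.I, -6 - 4 * Complex.I, 2 + 4 * Complex.I;
         -4 + 6 * Complex.I, 1 + 8 * Complex.I, 2 - 4 * Complex.I;
         2 + 4 * Complex.I, 4 + 2 * Complex.I, -1 - 2 * Complex.I] =
      !![μ + 1 + 6 * Complex.I, 6 + 4 * Complex.I, -2 - 4 * Complex.I;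
         4 - 6 * Complex.I, μ - 1 - 8 * Complex.I, -2 + 4 * Complex.I;
         -2 - 4 * Complex.I, -4 - 2 * Complex.I, μ + 1 + 2 * Complex.I] := by
    rw [Matrix.one_fin_three]
    ext i j
    fin_cases i <;> fin_cases j <;>
      simp [Matrix.vecHead, Matrix.vecTail] <;> ring
  rw [hm, Matrix.det_fin_three] at h
  simp only [Matrix.cons_val', Matrix.cons_val_zero, Matrix.cons_val_one, Matrix.head_cons,
    Matrix.empty_val', Matrix.cons_val_fin_one, Matrix.head_fin_const, Matrix.cons_val_two,
    Matrix.tail_cons, Matrix.of_apply] at h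
  have key : (μ - 1) * ((μ + 1) * (μ + 1)) = 0 := by
    linear_combination h + (36 * μ - 28 - 16 * Complex.I) * Complex.I_mul_I
  rcases mul_eq_zero.mp key with h1 | h1
  · have : μ = 1 := by linear_combination h1
    simp [this]
  · rcases mul_eq_zero.mp h1 with h2 | h2 <;>
      · have : μ = -1 := by linear_combination h2
        simp [this]

lemma aux_unit₂ : UnitEigenvalues
    !![5, 2 - 6 * Complex.I, -4;
       -8 - 4 * Complex.I, -7 + 8 * Complex.I, 6 + 2 * Complex.I;
       -8 + 8 * Complex.I, 8 + 12 * Complex.I, 5 - 8 * Complex.I] := by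
  intro μ h
  rw [Polynomial.IsRoot, aux_eval_charpoly] at h
  have hm : μ • (1 : Matrix (Fin 3) (Fin 3) ℂ) -
      !![5, 2 - 6 * Complex.I, -4;
         -8 - 4 * Complex.I, -7 + 8 * Complex.I, 6 + 2 * Complex.I;
         -8 + 8 * Complex.I, 8 + 12 * Complex.I, 5 - 8 * Complex.I] =
      !![μ - 5, -2 + 6 * Complex.I, 4;
         8 + 4 * Complex.I, μ + 7 - 8 * Complex.I, -6 - 2 * Complex.I;
         8 - 8 * Complex.I, -8 - 12 * Complex.I, μ - 5 + 8 * Complex.I] := by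
    rw [Matrix.one_fin_three]
    ext i j
    fin_cases i <;> fin_cases j <;>
      simp [Matrix.vecHead, Matrix.vecTail] <;> ring
  rw [hm, Matrix.det_fin_three] at h
  simp only [Matrix.cons_val', Matrix.cons_val_zero, Matrix.cons_val_one, Matrix.head_cons,
    Matrix.empty_val', Matrix.cons_val_fin_one, Matrix.head_fin_const, Matrix.cons_val_two,
    Matrix.tail_cons, Matrix.of_apply] at h
  have key : (μ - 1) * ((μ - 1) * (μ - 1)) = 0 := by
    linear_combination h + (96 * Complex.I + 48 + 112 * μ) * Complex.I_mul_I
  rcases mul_eq_zero.mp key with h1 | h1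
  · have : μ = 1 := by linear_combination h1
    simp [this]
  · rcases mul_eq_zero.mp h1 with h2 | h2 <;>
      · have : μ = 1 := by linear_combination h2
        simp [this]

/-- The Whitehead link boundary holonomy elements `H₁ = G₃⁻¹G₁⁻¹` and
`H'₁ = G₃G₁⁻²G₃` are the stated matrices and are parabolic. -/
theorem whitehead_torus_holonomy :
    (W₃⁻¹ * W₁⁻¹ =
      !![-1 - 6 * Complex.I, -6 - 4 * Complex.I, 2 + 4 * Complex.I;
         -4 + 6 * Complex.I, 1 + 8 * Complex.I, 2 - 4 * Complex.I;
         2 + 4 * Complex.I, 4 + 2 * Complex.I, -1 - 2 * Complex.I] ∧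
      Parabolic (W₃⁻¹ * W₁⁻¹)) ∧
    (W₃ * (W₁⁻¹) ^ 2 * W₃ =
      !![5, 2 - 6 * Complex.I, -4;
         -8 - 4 * Complex.I, -7 + 8 * Complex.I, 6 + 2 * Complex.I;
         -8 + 8 * Complex.I, 8 + 12 * Complex.I, 5 - 8 * Complex.I] ∧
      Parabolic (W₃ * (W₁⁻¹) ^ 2 * W₃)) := by
  refine ⟨⟨aux_H1_eq, ?_, ?_⟩, ⟨aux_H2_eq, ?_, ?_⟩⟩
  · rw [aux_H1_eq]; exact aux_unit₁
  · rw [aux_H1_eq]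
    apply aux_not_diag₁
    · have hA : (!![-1 - 6 * Complex.I, -6 - 4 * Complex.I, 2 + 4 * Complex.I;
          -4 + 6 * Complex.I, 1 + 8 * Complex.I, 2 - 4 * Complex.I;
          2 + 4 * Complex.I, 4 + 2 * Complex.I, -1 - 2 * Complex.I]
          - (1 : Matrix (Fin 3) (Fin 3) ℂ)) =
          !![-2 - 6 * Complex.I, -6 - 4 * Complex.I, 2 + 4 * Complex.I;
             -4 + 6 * Complex.I, 8 * Complex.I, 2 - 4 * Complex.I;
             2 + 4 * Complex.I, 4 + 2 * Complex.I, -2 - 2 * Complex.I] := by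
        rw [Matrix.one_fin_three]
        ext i j
        fin_cases i <;> fin_cases j <;>
          simp [Matrix.vecHead, Matrix.vecTail] <;> ring
      have hB : (!![-1 - 6 * Complex.I, -6 - 4 * Complex.I, 2 + 4 * Complex.I;
          -4 + 6 * Complex.I, 1 + 8 * Complex.I, 2 - 4 * Complex.I;
          2 + 4 * Complex.I, 4 + 2 * Complex.I, -1 - 2 * Complex.I]
          + (1 : Matrix (Fin 3) (Fin 3) ℂ)) =
          !![-6 * Complex.I, -6 - 4 * Complex.I, 2 + 4 * Complex.I;
             -4 + 6 * Complex.I, 2 + 8 * Complex.I, 2 - 4 * Complex.I;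
             2 + 4 * Complex.I, 4 + 2 * Complex.I, -2 * Complex.I] := by
        rw [Matrix.one_fin_three]
        ext i j
        fin_cases i <;> fin_cases j <;>
          simp [Matrix.vecHead, Matrix.vecTail] <;> ring
      have hBB : (!![-6 * Complex.I, -6 - 4 * Complex.I, 2 + 4 * Complex.I;
             -4 + 6 * Complex.I, 2 + 8 * Complex.I, 2 - 4 * Complex.I;
             2 + 4 * Complex.I, 4 + 2 * Complex.I, -2 * Complex.I] *
           !![-6 * Complex.I, -6 - 4 * Complex.I, 2 + 4 * Complex.I;
             -4 + 6 * Complex.I, 2 + 8 * Complex.I, 2 - 4 * Complex.I;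
             2 + 4 * Complex.I, 4 + 2 * Complex.I, -2 * Complex.I]) =
           !![-4 * Complex.I, -4, 4;
              4 * Complex.I, 4, -4;
              4, -4 * Complex.I, 4 * Complex.I] := by
        rw [Matrix.mul_fin_three]
        ext i j
        fin_cases i <;> fin_cases j <;>
          simp [Matrix.vecHead, Matrix.vecTail, Complex.ext_iff] <;> norm_num
      rw [hA, hB, hBB, Matrix.mul_fin_three]
      ext i j
      fin_cases i <;> fin_cases j <;>
        simp [Matrix.vecHead, Matrix.vecTail, Complex.ext_iff] <;> norm_num
    · intro hcontra
      have h01 := congrFun (congrFun hcontra 0) 1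
      rw [Matrix.mul_fin_three] at h01
      simp [Matrix.one_apply, Matrix.vecHead, Matrix.vecTail, Complex.ext_iff] at h01
      norm_num at h01
  · rw [aux_H2_eq]; exact aux_unit₂
  · rw [aux_H2_eq]
    apply aux_not_diag₂
    · have hA : (!![(5 : ℂ), 2 - 6 * Complex.I, -4;
          -8 - 4 * Complex.I, -7 + 8 * Complex.I, 6 + 2 * Complex.I;
          -8 + 8 * Complex.I, 8 + 12 * Complex.I, 5 - 8 * Complex.I]
          - (1 : Matrix (Fin 3) (Fin 3) ℂ)) =
          !![4, 2 - 6 * Complex.I, -4;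
             -8 - 4 * Complex.I, -8 + 8 * Complex.I, 6 + 2 * Complex.I;
             -8 + 8 * Complex.I, 8 + 12 * Complex.I, 4 - 8 * Complex.I] := by
        rw [Matrix.one_fin_three]
        ext i j
        fin_cases i <;> fin_cases j <;>
          simp [Matrix.vecHead, Matrix.vecTail] <;> ring
      have hCC : (!![(4 : ℂ), 2 - 6 * Complex.I, -4;
             -8 - 4 * Complex.I, -8 + 8 * Complex.I, 6 + 2 * Complex.I;
             -8 + 8 * Complex.I, 8 + 12 * Complex.I, 4 - 8 * Complex.I] *
           !![(4 : ℂ), 2 - 6 * Complex.I, -4;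
             -8 - 4 * Complex.I, -8 + 8 * Complex.I, 6 + 2 * Complex.I;
             -8 + 8 * Complex.I, 8 + 12 * Complex.I, 4 - 8 * Complex.I]) =
           !![8 + 8 * Complex.I, 8 - 8 * Complex.I, -8;
              -16 * Complex.I, -16, 8 + 8 * Complex.I;
              -16, 16 * Complex.I, 8 - 8 * Complex.I] := by
        rw [Matrix.mul_fin_three]
        ext i j
        fin_cases i <;> fin_cases j <;>
          simp [Matrix.vecHead, Matrix.vecTail, Complex.ext_iff] <;> norm_num
      rw [hA, hCC, Matrix.mul_fin_three]
      ext i j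
      fin_cases i <;> fin_cases j <;>
        simp [Matrix.vecHead, Matrix.vecTail, Complex.ext_iff] <;> norm_num
    · intro hcontra
      have h00 := congrFun (congrFun hcontra 0) 0
      rw [Matrix.one_fin_three] at h00
      simp [Matrix.vecHead, Matrix.vecTail, Complex.ext_iff] at h00

end
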